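/- Let E < E₀. For each ρ ∈ 𝓜 there exists a sequence {ρⁿ} ⊂ 𝓜 converging to ρ in 𝓜 such that each ρⁿ is twice continuously differentiable on [−1,1], satisfies ρⁿ(−1) = ρ₋, ρⁿ(1) = ρ₊ and 0 < ρⁿ(u) < 1 for all u, and S_E(ρⁿ) → S_E(ρ). -/

import Mathlib

open Real MeasureTheory Set Filter Topology Function

noncomputable section

/-- Mobility `χ(a) = a(1−a)`. -/
def chi (a : ℝ) : ℝ := a * (1 - a)

/-- The set `𝓜`: measurable density profiles on `[−1,1]` with values in `[0,1]`. -/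
def memM (ρ : ℝ → ℝ) : Prop :=
  Measurable ρ ∧ ∀ u ∈ Set.Icc (-1:ℝ) 1, ρ u ∈ Set.Icc (0:ℝ) 1

/-- Convergence in `𝓜`: weak convergence against continuous test functions. -/
def convM (ρn : ℕ → ℝ → ℝ) (ρ : ℝ → ℝ) : Prop :=
  ∀ G : ℝ → ℝ, ContinuousOn G (Set.Icc (-1:ℝ) 1) →
    Filter.Tendsto (fun n => ∫ u in (-1:ℝ)..1, ρn n u * G u) Filter.atTop
      (nhds (∫ u in (-1:ℝ)..1, ρ u * G u))

/-- `φ ∈ 𝓕_E`, with explicit derivative function `d`: `φ` is `C¹` on `[−1,1]` with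
Lipschitz derivative `d`, `φ(−1) = φ₋`, `φ(1) = φ₊`, and `d > max 0 E` on `[−1,1]`. -/
def memF (φm φp E : ℝ) (φ d : ℝ → ℝ) : Prop :=
  (∀ u ∈ Set.Icc (-1:ℝ) 1, HasDerivWithinAt φ (d u) (Set.Icc (-1:ℝ) 1) u) ∧
  (∃ L : NNReal, LipschitzOnWith L d (Set.Icc (-1:ℝ) 1)) ∧
  φ (-1) = φm ∧ φ 1 = φp ∧
  (∀ u ∈ Set.Icc (-1:ℝ) 1, max 0 E < d u)

/-- The functional `𝓖_E(ρ,φ)` (with `d = φ'`), including the `E = 0` case.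
Recall the convention `0 log 0 = 0` (in Lean `Real.log 0 = 0`). -/
def GEint (E A : ℝ) (ρ φ d : ℝ → ℝ) : ℝ :=
  ∫ u in (-1:ℝ)..1,
    (ρ u * Real.log (ρ u) + (1 - ρ u) * Real.log (1 - ρ u)
      + (1 - ρ u) * φ u - Real.log (1 + Real.exp (φ u))
      + (if E = 0 then Real.log (d u) + 1
         else E⁻¹ * (d u * Real.log (d u) - (d u - E) * Real.log (d u - E)))
      - A)

/-- `S_E(ρ) = sup_{φ ∈ 𝓕_E} 𝓖_E(ρ,φ)`. -/
def SE (φm φp E A : ℝ) (ρ : ℝ → ℝ) : ℝ :=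
  sSup { x | ∃ φ d : ℝ → ℝ, memF φm φp E φ d ∧ x = GEint E A ρ φ d }

namespace St11
open intervalIntegral

def psi (x : ℝ) : ℝ := (1 + Real.exp (-x))⁻¹

lemma one_add_exp_pos (x : ℝ) : 0 < 1 + Real.exp (-x) := by positivity

lemma psi_pos (x : ℝ) : 0 < psi x := by
  unfold psi; positivity

lemma psi_lt_one (x : ℝ) : psi x < 1 := by
  unfold psi
  rw [inv_lt_one_iff₀]
  right
  nlinarith [Real.exp_pos (-x)]

lemma contDiff_psi : ContDiff ℝ (⊤ : ℕ∞) psi := by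
  have h : ContDiff ℝ (⊤ : ℕ∞) (fun x : ℝ => 1 + Real.exp (-x)) :=
    contDiff_const.add (Real.contDiff_exp.comp contDiff_neg)
  exact h.inv fun x => (one_add_exp_pos x).ne'

lemma hasDerivAt_psi (x : ℝ) :
    HasDerivAt psi (Real.exp (-x) / (1 + Real.exp (-x)) ^ 2) x := by
  have h1 : HasDerivAt (fun y : ℝ => 1 + Real.exp (-y)) (Real.exp (-x) * (-1)) x :=
    ((hasDerivAt_neg x).exp).const_add 1
  have h2 := h1.inv (one_add_exp_pos x).ne'
  exact h2.congr_deriv (by ring)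

lemma psi_lip (a b : ℝ) : |psi a - psi b| ≤ |a - b| := by
  have hd : Differentiable ℝ psi := fun x => (hasDerivAt_psi x).differentiableAt
  have hlip : LipschitzWith 1 psi := by
    apply lipschitzWith_of_nnnorm_deriv_le hd
    intro x
    rw [(hasDerivAt_psi x).deriv]
    rw [← NNReal.coe_le_coe]
    push_cast
    rw [Real.norm_eq_abs, abs_of_nonneg (by positivity)]
    rw [div_le_one (by positivity)]
    nlinarith [Real.exp_pos (-x), Real.exp_nonneg (-x)]
  have := hlip.dist_le_mul a b
  simpa [Real.dist_eq] using this

lemma psi_logit {t : ℝ} (h0 : 0 < t) (h1 : t < 1) :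
    psi (Real.log t - Real.log (1 - t)) = t := by
  unfold psi
  rw [neg_sub, Real.exp_sub, Real.exp_log (by linarith), Real.exp_log h0]
  field_simp
  ring

lemma contDiff_polyeval (P : Polynomial ℝ) : ContDiff ℝ (⊤ : ℕ∞) (fun x : ℝ => P.eval x) := by
  induction P using Polynomial.induction_on' with
  | add p q hp hq => simpa [Polynomial.eval_add] using hp.add hq
  | monomial n a =>
      simpa [Polynomial.eval_monomial] using (contDiff_const (c := a)).mul (contDiff_id.pow n)

/-- |x log x| ≤ 1 on [0,1] -/
lemma abs_mul_log_le_one {x : ℝ} (h0 : 0 ≤ x) (h1 : x ≤ 1) : |x * Real.log x| ≤ 1 := by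
  rcases eq_or_lt_of_le h0 with h | h
  · simp [← h]
  · have hlog : Real.log x ≤ 0 := Real.log_nonpos h0 h1
    have h2 : x * Real.log x ≤ 0 := mul_nonpos_of_nonneg_of_nonpos h0 hlog
    rw [abs_of_nonpos h2, neg_le]
    have hinv : Real.log x = - Real.log x⁻¹ := by rw [Real.log_inv]; ring
    have h3 : Real.log x⁻¹ ≤ x⁻¹ - 1 := Real.log_le_sub_one_of_pos (by positivity)
    have h4 : x * Real.log x = - (x * Real.log x⁻¹) := by rw [hinv]; ring
    rw [h4]
    rw [neg_le_neg_iff]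
    calc x * Real.log x⁻¹ ≤ x * (x⁻¹ - 1) := by nlinarith [Real.log_le_sub_one_of_pos (show (0:ℝ) < x⁻¹ by positivity)]
    _ = 1 - x := by field_simp
    _ ≤ 1 := by linarith


/-- the `φ'`-dependent term in the integrand -/
def hfn (E x : ℝ) : ℝ :=
  if E = 0 then Real.log x + 1
  else E⁻¹ * (x * Real.log x - (x - E) * Real.log (x - E))

lemma hfn_le {E x : ℝ} (hx : 0 < x) (hEx : E < x) : hfn E x ≤ x - E / 2 := by
  rcases eq_or_ne E 0 with hE | hE
  · subst hE
    have h : hfn 0 x = Real.log x + 1 := by simp [hfn]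
    rw [h]
    have := Real.log_le_sub_one_of_pos hx
    linarith
  · have h : hfn E x = E⁻¹ * (x * Real.log x - (x - E) * Real.log (x - E)) := by
      simp [hfn, hE]
    rw [h]
    have hxE : 0 < x - E := by linarith
    have hmin : 0 < min (x - E) x := lt_min hxE hx
    have hkey : ∀ t ∈ Set.uIcc (x - E) x, HasDerivAt (fun t : ℝ => t * Real.log t)
        (Real.log t + 1) t := by
      intro t ht
      have : 0 < t := lt_of_lt_of_le hmin ht.1
      exact Real.hasDerivAt_mul_log this.ne'
    have hcont : IntervalIntegrable (fun t => Real.log t + 1) MeasureTheory.volume (x - E) x := by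
      apply ContinuousOn.intervalIntegrable
      intro t ht
      have ht0 : 0 < t := lt_of_lt_of_le hmin ht.1
      exact ((Real.continuousAt_log ht0.ne').continuousWithinAt.add continuousWithinAt_const)
    have hftc := intervalIntegral.integral_eq_sub_of_hasDerivAt hkey hcont
    have heq : x * Real.log x - (x - E) * Real.log (x - E)
        = ∫ t in (x - E)..x, (Real.log t + 1) := by rw [hftc]
    rw [heq]
    rcases lt_or_gt_of_ne hE with hEneg | hEpos
    · -- E < 0
      have hE' : (0:ℝ) < -E := by linarith
      have hmono : (∫ t in x..(x - E), (Real.log t + 1)) ≤ ∫ t in x..(x - E), t := by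
        apply integral_mono_on (by linarith)
        · exact hcont.symm
        · exact ContinuousOn.intervalIntegrable (continuous_id.continuousOn)
        · intro t ht
          have ht0 : 0 < t := lt_of_lt_of_le hx ht.1
          have := Real.log_le_sub_one_of_pos ht0
          linarith
      have hid2 : (∫ t in x..(x - E), t) = E ^ 2 / 2 - E * x := by
        rw [integral_id]; ring
      have hIle : (∫ t in x..(x - E), (Real.log t + 1)) ≤ E ^ 2 / 2 - E * x := by
        rw [← hid2]; exact hmono
      have e1 : E⁻¹ * (∫ t in (x - E)..x, (Real.log t + 1))
          = (-E)⁻¹ * (∫ t in x..(x - E), (Real.log t + 1)) := by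
        rw [integral_symm, inv_neg]; ring
      rw [e1]
      calc (-E)⁻¹ * (∫ t in x..(x - E), (Real.log t + 1))
          ≤ (-E)⁻¹ * (E ^ 2 / 2 - E * x) := by
            exact mul_le_mul_of_nonneg_left hIle (by positivity)
        _ = x - E / 2 := by field_simp; ring
    · -- E > 0
      have hmono : (∫ t in (x - E)..x, (Real.log t + 1)) ≤ ∫ t in (x - E)..x, t := by
        apply integral_mono_on (by linarith)
        · exact hcont
        · exact ContinuousOn.intervalIntegrable (continuous_id.continuousOn)
        · intro t ht
          have ht0 : 0 < t := lt_of_lt_of_le hxE ht.1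
          have := Real.log_le_sub_one_of_pos ht0
          linarith
      have hid : (∫ t in (x - E)..x, t) = E * x - E ^ 2 / 2 := by
        rw [integral_id]; ring
      calc E⁻¹ * (∫ t in (x - E)..x, (Real.log t + 1)) ≤ E⁻¹ * (E * x - E ^ 2 / 2) := by
            rw [← hid]
            exact mul_le_mul_of_nonneg_left hmono (by positivity)
        _ = x - E / 2 := by field_simp

lemma intIcc {f : ℝ → ℝ}
    (hm : AEStronglyMeasurable f (volume.restrict (Set.Icc (-1:ℝ) 1))) {C : ℝ}
    (hb : ∀ u ∈ Set.Icc (-1:ℝ) 1, |f u| ≤ C) : IntegrableOn f (Set.Icc (-1:ℝ) 1) := by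
  refine Integrable.mono' (integrable_const C) hm ?_
  filter_upwards [ae_restrict_mem measurableSet_Icc] with u hu
  simpa [Real.norm_eq_abs] using hb u hu

lemma intII {f : ℝ → ℝ}
    (hm : AEStronglyMeasurable f (volume.restrict (Set.Icc (-1:ℝ) 1))) {C : ℝ}
    (hb : ∀ u ∈ Set.Icc (-1:ℝ) 1, |f u| ≤ C) : IntervalIntegrable f volume (-1) 1 := by
  apply IntegrableOn.intervalIntegrable
  rw [Set.uIcc_of_le (by norm_num : (-1:ℝ) ≤ 1)]
  exact intIcc hm hb

lemma tendstoII {F : ℕ → ℝ → ℝ} {f : ℝ → ℝ}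
    (hm : ∀ n, AEStronglyMeasurable (F n) (volume.restrict (Set.Ioc (-1:ℝ) 1)))
    {C : ℝ} (hb : ∀ n, ∀ u ∈ Set.Icc (-1:ℝ) 1, |F n u| ≤ C)
    (hf : ∀ᵐ u ∂(volume.restrict (Set.Ioc (-1:ℝ) 1)),
      Filter.Tendsto (fun n => F n u) Filter.atTop (nhds (f u))) :
    Filter.Tendsto (fun n => ∫ u in (-1:ℝ)..1, F n u) Filter.atTop
      (nhds (∫ u in (-1:ℝ)..1, f u)) := by
  have h1 : ∀ n, ∀ᵐ u ∂(volume.restrict (Set.Ioc (-1:ℝ) 1)), ‖F n u‖ ≤ C := by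
    intro n
    filter_upwards [ae_restrict_mem measurableSet_Ioc] with u hu
    simpa [Real.norm_eq_abs] using hb n u (Set.Ioc_subset_Icc_self hu)
  have := MeasureTheory.tendsto_integral_of_dominated_convergence (fun _ => C) hm
    (integrable_const C) h1 hf
  simpa [intervalIntegral.integral_of_le (show (-1:ℝ) ≤ 1 by norm_num)] using this

variable {φm φp E : ℝ} {φ d : ℝ → ℝ}

lemma memF_contPhi (hF : memF φm φp E φ d) : ContinuousOn φ (Set.Icc (-1:ℝ) 1) :=
  fun u hu => (hF.1 u hu).continuousWithinAt

lemma memF_contD (hF : memF φm φp E φ d) : ContinuousOn d (Set.Icc (-1:ℝ) 1) := by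
  obtain ⟨L, hL⟩ := hF.2.1
  exact hL.continuousOn

lemma memF_hasDA (hF : memF φm φp E φ d) {x : ℝ} (hx : x ∈ Set.Ioo (-1:ℝ) 1) :
    HasDerivAt φ (d x) x :=
  (hF.1 x (Set.Ioo_subset_Icc_self hx)).hasDerivAt (Icc_mem_nhds hx.1 hx.2)

lemma memF_dpos (hF : memF φm φp E φ d) {u : ℝ} (hu : u ∈ Set.Icc (-1:ℝ) 1) : 0 < d u :=
  lt_of_le_of_lt (le_max_left 0 E) (hF.2.2.2.2 u hu)

lemma memF_dgtE (hF : memF φm φp E φ d) {u : ℝ} (hu : u ∈ Set.Icc (-1:ℝ) 1) : E < d u :=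
  lt_of_le_of_lt (le_max_right 0 E) (hF.2.2.2.2 u hu)

lemma memF_mono (hF : memF φm φp E φ d) : MonotoneOn φ (Set.Icc (-1:ℝ) 1) := by
  apply monotoneOn_of_deriv_nonneg (convex_Icc _ _) (memF_contPhi hF)
  · rw [interior_Icc]
    exact fun x hx => ((memF_hasDA hF) hx).differentiableAt.differentiableWithinAt
  · intro x hx
    rw [interior_Icc] at hx
    rw [((memF_hasDA hF) hx).deriv]
    exact ((memF_dpos hF) (Set.Ioo_subset_Icc_self hx)).le

lemma memF_phi_mem (hF : memF φm φp E φ d) {u : ℝ} (hu : u ∈ Set.Icc (-1:ℝ) 1) :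
    φ u ∈ Set.Icc φm φp := by
  have hm1 : (-1:ℝ) ∈ Set.Icc (-1:ℝ) 1 := by constructor <;> norm_num
  have hp1 : (1:ℝ) ∈ Set.Icc (-1:ℝ) 1 := by constructor <;> norm_num
  constructor
  · rw [← hF.2.2.1]
    exact (memF_mono hF) hm1 hu hu.1
  · rw [← hF.2.2.2.1]
    exact (memF_mono hF) hu hp1 hu.2

lemma memF_intd (hF : memF φm φp E φ d) : ∫ u in (-1:ℝ)..1, d u = φp - φm := by
  have hint : IntervalIntegrable d volume (-1) 1 := by
    apply ContinuousOn.intervalIntegrable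
    rw [Set.uIcc_of_le (by norm_num : (-1:ℝ) ≤ 1)]
    exact (memF_contD hF)
  have := intervalIntegral.integral_eq_sub_of_hasDeriv_right_of_le (by norm_num)
    (memF_contPhi hF) (fun x hx => ((memF_hasDA hF) hx).hasDerivWithinAt) hint
  rw [this, hF.2.2.2.1, hF.2.2.1]


/-- entropy function -/
def Hf (x : ℝ) : ℝ := x * Real.log x + (1 - x) * Real.log (1 - x)

lemma continuous_Hf : Continuous Hf := by
  unfold Hf
  exact Real.continuous_mul_log.add
    (Real.continuous_mul_log.comp (continuous_const.sub continuous_id))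

lemma abs_Hf_le {x : ℝ} (h0 : 0 ≤ x) (h1 : x ≤ 1) : |Hf x| ≤ 2 := by
  have h1' := abs_mul_log_le_one h0 h1
  have h2' := abs_mul_log_le_one (by linarith : (0:ℝ) ≤ 1 - x) (by linarith : (1:ℝ) - x ≤ 1)
  calc |Hf x| ≤ |x * Real.log x| + |(1 - x) * Real.log (1 - x)| := abs_add_le _ _
    _ ≤ 2 := by linarith

lemma memF_absphi (hF : memF φm φp E φ d) {u : ℝ} (hu : u ∈ Set.Icc (-1:ℝ) 1) :
    |φ u| ≤ max |φm| |φp| := by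
  have h := memF_phi_mem hF hu
  rw [abs_le]
  constructor
  · have : -|φm| ≤ φm := neg_abs_le φm
    have := le_max_left |φm| |φp|
    linarith [h.1]
  · have : φp ≤ |φp| := le_abs_self φp
    have := le_max_right |φm| |φp|
    linarith [h.2]

lemma conthfnd (hF : memF φm φp E φ d) :
    ContinuousOn (fun u => hfn E (d u)) (Set.Icc (-1:ℝ) 1) := by
  rcases eq_or_ne E 0 with hE | hE
  · simp only [hfn, if_pos hE]
    exact ((memF_contD hF).log fun u hu => (memF_dpos hF hu).ne').add continuousOn_const
  · simp only [hfn, if_neg hE]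
    apply continuousOn_const.mul
    apply ContinuousOn.sub
    · exact (memF_contD hF).mul
        ((memF_contD hF).log fun u hu => (memF_dpos hF hu).ne')
    · have hc : ContinuousOn (fun u => d u - E) (Set.Icc (-1:ℝ) 1) :=
        (memF_contD hF).sub continuousOn_const
      exact hc.mul (hc.log fun u hu => by
        have := memF_dgtE hF hu
        intro h
        rw [sub_eq_zero] at h
        exact absurd h.symm (ne_of_lt this))

/-- the integrand of `GEint` -/
def intg (E A : ℝ) (ρ φ d : ℝ → ℝ) (u : ℝ) : ℝ :=
  ρ u * Real.log (ρ u) + (1 - ρ u) * Real.log (1 - ρ u)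
    + (1 - ρ u) * φ u - Real.log (1 + Real.exp (φ u)) + hfn E (d u) - A

lemma GEint_eq (E A : ℝ) (ρ φ d : ℝ → ℝ) :
    GEint E A ρ φ d = ∫ u in (-1:ℝ)..1, intg E A ρ φ d u := rfl

variable {ρ : ℝ → ℝ} {A : ℝ}

lemma intg_aesm (hρ : memM ρ) (hF : memF φm φp E φ d) :
    AEStronglyMeasurable (intg E A ρ φ d) (volume.restrict (Set.Icc (-1:ℝ) 1)) := by
  have h1 : Measurable fun u => ρ u * Real.log (ρ u) :=
    hρ.1.mul (Real.measurable_log.comp hρ.1)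
  have h1' : Measurable fun u => (1 - ρ u) * Real.log (1 - ρ u) :=
    (measurable_const.sub hρ.1).mul (Real.measurable_log.comp (measurable_const.sub hρ.1))
  have h2 : AEStronglyMeasurable (fun u => (1 - ρ u) * φ u)
      (volume.restrict (Set.Icc (-1:ℝ) 1)) :=
    (measurable_const.sub hρ.1).aestronglyMeasurable.mul
      ((memF_contPhi hF).aestronglyMeasurable measurableSet_Icc)
  have h3 : ContinuousOn (fun u => Real.log (1 + Real.exp (φ u))) (Set.Icc (-1:ℝ) 1) := by
    apply ContinuousOn.log
    · exact continuousOn_const.add (Real.continuous_exp.comp_continuousOn (memF_contPhi hF))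
    · intro u _
      positivity
  have h4 := conthfnd hF
  exact ((((h1.aestronglyMeasurable.add h1'.aestronglyMeasurable).add h2).sub
    (h3.aestronglyMeasurable measurableSet_Icc)).add
    (h4.aestronglyMeasurable measurableSet_Icc)).sub aestronglyMeasurable_const

lemma intg_II (hρ : memM ρ) (hF : memF φm φp E φ d) :
    IntervalIntegrable (intg E A ρ φ d) volume (-1) 1 := by
  obtain ⟨C3, hC3⟩ := (isCompact_Icc).exists_bound_of_continuousOn (conthfnd hF)
  apply intII (intg_aesm hρ hF)
    (C := 1 + 1 + max |φm| |φp| + |Real.log (1 + Real.exp φp)| + C3 + |A|)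
  intro u hu
  have hr := hρ.2 u hu
  have e1 : |ρ u * Real.log (ρ u)| ≤ 1 := abs_mul_log_le_one hr.1 hr.2
  have e2 : |(1 - ρ u) * Real.log (1 - ρ u)| ≤ 1 :=
    abs_mul_log_le_one (by linarith [hr.2]) (by linarith [hr.1])
  have e3 : |(1 - ρ u) * φ u| ≤ max |φm| |φp| := by
    rw [abs_mul]
    calc |1 - ρ u| * |φ u| ≤ 1 * |φ u| := by
          apply mul_le_mul_of_nonneg_right _ (abs_nonneg _)
          rw [abs_le]; constructor <;> linarith [hr.1, hr.2]
      _ = |φ u| := one_mul _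
      _ ≤ max |φm| |φp| := memF_absphi hF hu
  have e4 : |Real.log (1 + Real.exp (φ u))| ≤ |Real.log (1 + Real.exp φp)| := by
    have hphi := memF_phi_mem hF hu
    have l1 : (0:ℝ) ≤ Real.log (1 + Real.exp (φ u)) := by
      apply Real.log_nonneg; nlinarith [Real.exp_pos (φ u)]
    have l2 : Real.log (1 + Real.exp (φ u)) ≤ Real.log (1 + Real.exp φp) := by
      apply Real.log_le_log (by positivity)
      have := Real.exp_le_exp.2 hphi.2
      linarith
    rw [abs_of_nonneg l1]
    exact le_trans l2 (le_abs_self _)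
  have e5 : |hfn E (d u)| ≤ C3 := by
    have := hC3 u hu
    rwa [Real.norm_eq_abs] at this
  unfold intg
  have b1 := abs_le.1 e1
  have b2 := abs_le.1 e2
  have b3 := abs_le.1 e3
  have b4 := abs_le.1 e4
  have b5 := abs_le.1 e5
  have b6 := abs_le.1 (le_refl |A|)
  rw [abs_le]
  constructor <;> nlinarith [neg_abs_le A, le_abs_self A]

lemma GEint_le (hρ : memM ρ) (hF : memF φm φp E φ d) :
    GEint E A ρ φ d ≤ 2 * (max |φm| |φp| - E / 2 - A) + (φp - φm) := by
  rw [GEint_eq]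
  have hconstd : IntervalIntegrable (fun u => (max |φm| |φp| - E / 2 - A) + d u)
      volume (-1) 1 := by
    apply IntervalIntegrable.add intervalIntegrable_const
    apply ContinuousOn.intervalIntegrable
    rw [Set.uIcc_of_le (by norm_num : (-1:ℝ) ≤ 1)]
    exact memF_contD hF
  have hmono : (∫ u in (-1:ℝ)..1, intg E A ρ φ d u)
      ≤ ∫ u in (-1:ℝ)..1, ((max |φm| |φp| - E / 2 - A) + d u) := by
    apply integral_mono_on (by norm_num) (intg_II hρ hF) hconstd
    intro u hu
    have hr := hρ.2 u hu
    have c1 : ρ u * Real.log (ρ u) ≤ 0 :=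
      mul_nonpos_of_nonneg_of_nonpos hr.1 (Real.log_nonpos hr.1 hr.2)
    have c2 : (1 - ρ u) * Real.log (1 - ρ u) ≤ 0 :=
      mul_nonpos_of_nonneg_of_nonpos (by linarith [hr.2])
        (Real.log_nonpos (by linarith [hr.2]) (by linarith [hr.1]))
    have c3 : (1 - ρ u) * φ u ≤ max |φm| |φp| := by
      have := abs_le.1 (memF_absphi hF hu)
      nlinarith [hr.1, hr.2]
    have c4 : (0:ℝ) ≤ Real.log (1 + Real.exp (φ u)) := by
      apply Real.log_nonneg; nlinarith [Real.exp_pos (φ u)]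
    have c5 : hfn E (d u) ≤ d u - E / 2 :=
      hfn_le (memF_dpos hF hu) (memF_dgtE hF hu)
    unfold intg
    linarith
  calc (∫ u in (-1:ℝ)..1, intg E A ρ φ d u)
      ≤ ∫ u in (-1:ℝ)..1, ((max |φm| |φp| - E / 2 - A) + d u) := hmono
    _ = 2 * (max |φm| |φp| - E / 2 - A) + (φp - φm) := by
        rw [integral_add intervalIntegrable_const (by
          apply ContinuousOn.intervalIntegrable
          rw [Set.uIcc_of_le (by norm_num : (-1:ℝ) ≤ 1)]
          exact memF_contD hF), intervalIntegral.integral_const, memF_intd hF, smul_eq_mul]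
        ring


def Dint (M0 : ℝ) (ρ1 ρ2 : ℝ → ℝ) : ℝ :=
  ∫ u in (-1:ℝ)..1, (|Hf (ρ1 u) - Hf (ρ2 u)| + M0 * |ρ1 u - ρ2 u|)

lemma Dint_II {M0 : ℝ} {ρ1 ρ2 : ℝ → ℝ} (hρ1 : memM ρ1) (hρ2 : memM ρ2) :
    IntervalIntegrable (fun u => |Hf (ρ1 u) - Hf (ρ2 u)| + M0 * |ρ1 u - ρ2 u|)
      volume (-1) 1 := by
  have hm : Measurable fun u => |Hf (ρ1 u) - Hf (ρ2 u)| + M0 * |ρ1 u - ρ2 u| := by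
    apply Measurable.add
    · exact ((continuous_Hf.measurable.comp hρ1.1).sub
        (continuous_Hf.measurable.comp hρ2.1)).abs
    · exact measurable_const.mul (hρ1.1.sub hρ2.1).abs
  apply intII hm.aestronglyMeasurable (C := 4 + |M0|)
  intro u hu
  have hr1 := hρ1.2 u hu
  have hr2 := hρ2.2 u hu
  have e1 : |Hf (ρ1 u) - Hf (ρ2 u)| ≤ 4 := by
    calc |Hf (ρ1 u) - Hf (ρ2 u)| ≤ |Hf (ρ1 u)| + |Hf (ρ2 u)| := abs_sub _ _
      _ ≤ 4 := by linarith [abs_Hf_le hr1.1 hr1.2, abs_Hf_le hr2.1 hr2.2]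
  have e2 : |M0| * |ρ1 u - ρ2 u| ≤ |M0| := by
    calc |M0| * |ρ1 u - ρ2 u| ≤ |M0| * 1 := by
          apply mul_le_mul_of_nonneg_left _ (abs_nonneg _)
          rw [abs_le]; constructor <;> linarith [hr1.1, hr1.2, hr2.1, hr2.2]
      _ = |M0| := mul_one _
  refine le_trans (abs_add_le _ _) ?_
  rw [abs_abs, abs_mul, abs_abs]
  linarith

lemma Dint_symm {M0 : ℝ} {ρ1 ρ2 : ℝ → ℝ} : Dint M0 ρ1 ρ2 = Dint M0 ρ2 ρ1 := by
  unfold Dint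
  congr 1
  funext u
  rw [abs_sub_comm, abs_sub_comm (ρ1 u)]

lemma GEint_diff {ρ1 ρ2 : ℝ → ℝ} (hρ1 : memM ρ1) (hρ2 : memM ρ2)
    (hF : memF φm φp E φ d) :
    GEint E A ρ1 φ d ≤ GEint E A ρ2 φ d + Dint (max |φm| |φp|) ρ1 ρ2 := by
  rw [GEint_eq, GEint_eq, ← sub_le_iff_le_add']
  rw [← integral_sub (intg_II hρ1 hF) (intg_II hρ2 hF)]
  unfold Dint
  apply integral_mono_on (by norm_num)
    ((intg_II hρ1 hF).sub (intg_II hρ2 hF)) (Dint_II hρ1 hρ2)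
  intro u hu
  have heq : intg E A ρ1 φ d u - intg E A ρ2 φ d u
      = (Hf (ρ1 u) - Hf (ρ2 u)) + (ρ2 u - ρ1 u) * φ u := by
    unfold intg Hf; ring
  rw [heq]
  have e1 : Hf (ρ1 u) - Hf (ρ2 u) ≤ |Hf (ρ1 u) - Hf (ρ2 u)| := le_abs_self _
  have e2 : (ρ2 u - ρ1 u) * φ u ≤ max |φm| |φp| * |ρ1 u - ρ2 u| := by
    calc (ρ2 u - ρ1 u) * φ u ≤ |(ρ2 u - ρ1 u) * φ u| := le_abs_self _
      _ = |ρ1 u - ρ2 u| * |φ u| := by rw [abs_mul, abs_sub_comm]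
      _ ≤ |ρ1 u - ρ2 u| * max |φm| |φp| :=
          mul_le_mul_of_nonneg_left (memF_absphi hF hu) (abs_nonneg _)
      _ = max |φm| |φp| * |ρ1 u - ρ2 u| := mul_comm _ _
  linarith

lemma SE_diff {ρ1 ρ2 : ℝ → ℝ} (hρ1 : memM ρ1) (hρ2 : memM ρ2)
    (hne : ∃ φ0 d0 : ℝ → ℝ, memF φm φp E φ0 d0) :
    SE φm φp E A ρ1 ≤ SE φm φp E A ρ2 + Dint (max |φm| |φp|) ρ1 ρ2 := by
  obtain ⟨φ0, d0, hF0⟩ := hne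
  have hbdd : BddAbove { x | ∃ φ d : ℝ → ℝ, memF φm φp E φ d ∧ x = GEint E A ρ2 φ d } := by
    refine ⟨2 * (max |φm| |φp| - E / 2 - A) + (φp - φm), ?_⟩
    rintro x ⟨φ', d', hF', rfl⟩
    exact GEint_le hρ2 hF'
  have hne1 : { x | ∃ φ d : ℝ → ℝ, memF φm φp E φ d ∧ x = GEint E A ρ1 φ d }.Nonempty :=
    ⟨GEint E A ρ1 φ0 d0, φ0, d0, hF0, rfl⟩
  unfold SE
  apply csSup_le hne1
  rintro x ⟨φ', d', hF', rfl⟩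
  calc GEint E A ρ1 φ' d' ≤ GEint E A ρ2 φ' d' + Dint (max |φm| |φp|) ρ1 ρ2 :=
        GEint_diff hρ1 hρ2 hF'
    _ ≤ sSup { x | ∃ φ d : ℝ → ℝ, memF φm φp E φ d ∧ x = GEint E A ρ2 φ d }
        + Dint (max |φm| |φp|) ρ1 ρ2 := by
        apply add_le_add_left
        exact le_csSup hbdd ⟨φ', d', hF', rfl⟩

lemma memF_lin (hmp : φm < φp) (hE : E < (φp - φm) / 2) :
    memF φm φp E (fun u => (φp + φm) / 2 + (φp - φm) / 2 * u) (fun _ => (φp - φm) / 2) := by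
  have hpos : 0 < (φp - φm) / 2 := by linarith
  refine ⟨?_, ⟨0, fun x _ y _ => by simp⟩, by ring, by ring, ?_⟩
  · intro u _
    have : HasDerivAt (fun u : ℝ => (φp + φm) / 2 + (φp - φm) / 2 * u) ((φp - φm) / 2) u := by
      simpa using ((hasDerivAt_id u).const_mul ((φp - φm) / 2)).const_add ((φp + φm) / 2)
    exact this.hasDerivWithinAt
  · intro u _
    exact max_lt hpos hE


lemma theta_pos (n : ℕ) : (0:ℝ) < ((n:ℝ) + 2)⁻¹ := by positivity

lemma theta_le_half (n : ℕ) : ((n:ℝ) + 2)⁻¹ ≤ 1 / 2 := by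
  rw [inv_le_comm₀ (by positivity) (by norm_num)]
  norm_num

lemma theta_tendsto : Filter.Tendsto (fun n : ℕ => ((n:ℝ) + 2)⁻¹) Filter.atTop (nhds 0) :=
  tendsto_inv_atTop_zero.comp
    (tendsto_atTop_add_const_right _ 2 tendsto_natCast_atTop_atTop)

lemma exists_smooth_approx (ρs : ℝ → ℝ) (hmeas : Measurable ρs)
    (h01 : ∀ u, ρs u ∈ Set.Icc (0:ℝ) 1) :
    ∃ fN : ℕ → ℝ → ℝ, (∀ n, ContDiff ℝ (⊤ : ℕ∞) (fN n)) ∧ (∀ n u, 0 < fN n u ∧ fN n u < 1) ∧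
      Filter.Tendsto (fun n => ∫ u in Set.Icc (-1:ℝ) 1, |fN n u - ρs u|)
        Filter.atTop (nhds 0) := by
  -- the clamped profiles and their logits
  set θ : ℕ → ℝ := fun n => ((n:ℝ) + 2)⁻¹ with hθ
  set t : ℕ → ℝ → ℝ := fun n u => (1 - θ n) * ρs u + θ n / 2 with ht
  have htb : ∀ n u, θ n / 2 ≤ t n u ∧ t n u ≤ 1 - θ n / 2 := by
    intro n u
    have h1 := (h01 u).1
    have h2 := (h01 u).2
    have h3 := theta_pos n
    have h4 := theta_le_half n
    constructor
    · have : (0:ℝ) ≤ (1 - θ n) * ρs u := by nlinarith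
      simp only [ht]; nlinarith
    · simp only [ht]; nlinarith
  have htpos : ∀ n u, 0 < t n u := fun n u =>
    lt_of_lt_of_le (by positivity) (htb n u).1
  have htlt : ∀ n u, t n u < 1 := fun n u =>
    lt_of_le_of_lt (htb n u).2 (by linarith [theta_pos n])
  set τ : ℕ → ℝ → ℝ := fun n u => Real.log (t n u) - Real.log (1 - t n u) with hτ
  have htmeas : ∀ n, Measurable (t n) := fun n =>
    (measurable_const.mul hmeas).add measurable_const
  have hτmeas : ∀ n, Measurable (τ n) := fun n =>
    (Real.measurable_log.comp (htmeas n)).sub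
      (Real.measurable_log.comp (measurable_const.sub (htmeas n)))
  have hτbd : ∀ n u, |τ n u| ≤ 2 * |Real.log (θ n / 2)| := by
    intro n u
    have h3 := theta_pos n
    have h4 := theta_le_half n
    have hb := htb n u
    have hlt : θ n / 2 ≤ 1 - t n u := by linarith [hb.2]
    have hlt2 : 1 - t n u ≤ 1 := by linarith [htpos n u]
    have k1 : |Real.log (t n u)| ≤ |Real.log (θ n / 2)| := by
      rw [abs_of_nonpos (Real.log_nonpos (htpos n u).le (htlt n u).le),
        abs_of_nonpos (Real.log_nonpos (by positivity) (by linarith))]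
      have := Real.log_le_log (by positivity : (0:ℝ) < θ n / 2) hb.1
      linarith
    have k2 : |Real.log (1 - t n u)| ≤ |Real.log (θ n / 2)| := by
      rw [abs_of_nonpos (Real.log_nonpos (by linarith [htlt n u]) hlt2),
        abs_of_nonpos (Real.log_nonpos (by positivity) (by linarith))]
      have := Real.log_le_log (by positivity : (0:ℝ) < θ n / 2) hlt
      linarith
    calc |τ n u| ≤ |Real.log (t n u)| + |Real.log (1 - t n u)| := abs_sub _ _
      _ ≤ 2 * |Real.log (θ n / 2)| := by linarith
  -- for each n, find a polynomial close to τ n in L¹ of [-1,1]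
  have key : ∀ n : ℕ, ∃ P : Polynomial ℝ,
      ∫ u in Set.Icc (-1:ℝ) 1, |τ n u - P.eval u| ≤ 3 * θ n := by
    intro n
    have hτIcc : IntegrableOn (τ n) (Set.Icc (-1:ℝ) 1) :=
      intIcc (hτmeas n).aestronglyMeasurable (fun u _ => hτbd n u)
    have hτind : Integrable ((Set.Icc (-1:ℝ) 1).indicator (τ n)) volume :=
      (integrable_indicator_iff measurableSet_Icc).2 hτIcc
    obtain ⟨c, -, hcL1, hccont, hcint⟩ :=
      hτind.exists_hasCompactSupport_integral_sub_le (theta_pos n)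
    obtain ⟨P, hP⟩ := exists_polynomial_near_of_continuousOn (-1) 1 c
      hccont.continuousOn (θ n) (theta_pos n)
    refine ⟨P, ?_⟩
    have hcIcc : IntegrableOn c (Set.Icc (-1:ℝ) 1) := hcint.integrableOn
    have hPIcc : IntegrableOn (fun u => P.eval u) (Set.Icc (-1:ℝ) 1) :=
      ((contDiff_polyeval P).continuous.integrableOn_Icc)
    have step1 : ∫ u in Set.Icc (-1:ℝ) 1, |τ n u - c u| ≤ θ n := by
      have he : ∀ u ∈ Set.Icc (-1:ℝ) 1,
          |τ n u - c u| = ‖(Set.Icc (-1:ℝ) 1).indicator (τ n) u - c u‖ := by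
        intro u hu
        rw [Set.indicator_of_mem hu, Real.norm_eq_abs]
      rw [setIntegral_congr_fun measurableSet_Icc he]
      calc ∫ u in Set.Icc (-1:ℝ) 1, ‖(Set.Icc (-1:ℝ) 1).indicator (τ n) u - c u‖
          ≤ ∫ u, ‖(Set.Icc (-1:ℝ) 1).indicator (τ n) u - c u‖ :=
            setIntegral_le_integral (hτind.sub hcint).norm
              (Filter.Eventually.of_forall fun u => norm_nonneg _)
        _ ≤ θ n := hcL1
    have step2 : ∫ u in Set.Icc (-1:ℝ) 1, |c u - P.eval u| ≤ 2 * θ n := by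
      have : ∫ u in Set.Icc (-1:ℝ) 1, |c u - P.eval u|
          ≤ ∫ _u in Set.Icc (-1:ℝ) 1, θ n := by
        apply setIntegral_mono_on ((hcIcc.sub hPIcc).abs) (integrableOn_const ?_)
          measurableSet_Icc
        · intro u hu
          exact le_of_lt (by simpa [abs_sub_comm] using hP u hu)
        · rw [Real.volume_Icc]
          norm_num
      calc ∫ u in Set.Icc (-1:ℝ) 1, |c u - P.eval u| ≤ ∫ _u in Set.Icc (-1:ℝ) 1, θ n := this
        _ = 2 * θ n := by
          rw [setIntegral_const, Real.volume_real_Icc, smul_eq_mul]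
          norm_num [ENNReal.toReal_ofReal]
    calc ∫ u in Set.Icc (-1:ℝ) 1, |τ n u - P.eval u|
        ≤ ∫ u in Set.Icc (-1:ℝ) 1, (|τ n u - c u| + |c u - P.eval u|) := by
          apply setIntegral_mono_on ((hτIcc.sub hPIcc).abs)
            (((hτIcc.sub hcIcc).abs).add ((hcIcc.sub hPIcc).abs)) measurableSet_Icc
          intro u _
          exact abs_sub_le _ _ _
      _ = (∫ u in Set.Icc (-1:ℝ) 1, |τ n u - c u|)
          + ∫ u in Set.Icc (-1:ℝ) 1, |c u - P.eval u| :=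
          MeasureTheory.integral_add ((hτIcc.sub hcIcc).abs) ((hcIcc.sub hPIcc).abs)
      _ ≤ 3 * θ n := by linarith
  choose P hPc using key
  refine ⟨fun n u => psi ((P n).eval u), fun n => contDiff_psi.comp (contDiff_polyeval (P n)),
    fun n u => ⟨psi_pos _, psi_lt_one _⟩, ?_⟩
  -- L¹ convergence
  have hbnd : ∀ n, ∫ u in Set.Icc (-1:ℝ) 1, |psi ((P n).eval u) - ρs u| ≤ 5 * θ n := by
    intro n
    have hfIcc : IntegrableOn (fun u => |psi ((P n).eval u) - ρs u|) (Set.Icc (-1:ℝ) 1) := by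
      apply Integrable.abs
      apply Integrable.sub _ (intIcc hmeas.aestronglyMeasurable
        (C := 1) (fun u _ => by
          have := h01 u
          rw [abs_le]; constructor <;> linarith [this.1, this.2]))
      exact ((contDiff_psi.comp (contDiff_polyeval (P n))).continuous.integrableOn_Icc)
    have hτPIcc : IntegrableOn (fun u => |τ n u - (P n).eval u| + θ n) (Set.Icc (-1:ℝ) 1) := by
      apply Integrable.add _ (integrableOn_const (by
        rw [Real.volume_Icc]; norm_num))
      apply Integrable.abs
      exact (intIcc (hτmeas n).aestronglyMeasurable (fun u _ => hτbd n u)).sub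
        ((contDiff_polyeval (P n)).continuous.integrableOn_Icc)
    have hpt : ∀ u, |psi ((P n).eval u) - ρs u| ≤ |τ n u - (P n).eval u| + θ n := by
      intro u
      have e0 : psi (τ n u) = t n u := psi_logit (htpos n u) (htlt n u)
      have e1 : |psi ((P n).eval u) - psi (τ n u)| ≤ |(P n).eval u - τ n u| := psi_lip _ _
      have e2 : |t n u - ρs u| ≤ θ n := by
        have h1 := (h01 u).1
        have h2 := (h01 u).2
        have h3 := theta_pos n
        have : t n u - ρs u = θ n * (1 / 2 - ρs u) := by simp only [ht]; ring
        rw [this, abs_mul, abs_of_pos h3]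
        calc θ n * |1 / 2 - ρs u| ≤ θ n * 1 := by
              apply mul_le_mul_of_nonneg_left _ h3.le
              rw [abs_le]; constructor <;> linarith
          _ = θ n := mul_one _
      calc |psi ((P n).eval u) - ρs u|
          ≤ |psi ((P n).eval u) - psi (τ n u)| + |psi (τ n u) - ρs u| := abs_sub_le _ _ _
        _ ≤ |(P n).eval u - τ n u| + θ n := by
            rw [← e0] at e2
            exact add_le_add e1 e2
        _ = |τ n u - (P n).eval u| + θ n := by rw [abs_sub_comm]
    calc ∫ u in Set.Icc (-1:ℝ) 1, |psi ((P n).eval u) - ρs u|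
        ≤ ∫ u in Set.Icc (-1:ℝ) 1, (|τ n u - (P n).eval u| + θ n) :=
          setIntegral_mono_on hfIcc hτPIcc measurableSet_Icc (fun u _ => hpt u)
      _ = (∫ u in Set.Icc (-1:ℝ) 1, |τ n u - (P n).eval u|)
          + ∫ _u in Set.Icc (-1:ℝ) 1, θ n := by
          apply MeasureTheory.integral_add
          · apply Integrable.abs
            exact (intIcc (hτmeas n).aestronglyMeasurable (fun u _ => hτbd n u)).sub
              ((contDiff_polyeval (P n)).continuous.integrableOn_Icc)
          · exact integrableOn_const (by rw [Real.volume_Icc]; norm_num)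
      _ ≤ 3 * θ n + 2 * θ n := by
          apply add_le_add (hPc n)
          rw [setIntegral_const, Real.volume_real_Icc, smul_eq_mul]
          norm_num [ENNReal.toReal_ofReal]
      _ = 5 * θ n := by ring
  apply squeeze_zero (fun n => setIntegral_nonneg measurableSet_Icc fun u _ => abs_nonneg _)
    hbnd
  simpa using theta_tendsto.const_mul 5


lemma convex_mem {s a c : ℝ} (hs : 0 ≤ s) (hs1 : s ≤ 1) (ha : 0 < a) (ha1 : a < 1)
    (hc : 0 < c) (hc1 : c < 1) :
    0 < s * a + (1 - s) * c ∧ s * a + (1 - s) * c < 1 := by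
  constructor
  · rcases le_total s (1/2) with h | h
    · nlinarith [mul_nonneg hs ha.le,
        mul_le_mul_of_nonneg_right (by linarith : (1:ℝ)/2 ≤ 1 - s) hc.le]
    · nlinarith [mul_nonneg (by linarith : (0:ℝ) ≤ 1 - s) hc.le,
        mul_le_mul_of_nonneg_right (by linarith : (1:ℝ)/2 ≤ s) ha.le]
  · rcases eq_or_lt_of_le hs with h | h
    · rw [← h]; ring_nf; linarith
    · nlinarith [mul_lt_mul_of_pos_left ha1 h,
        mul_le_mul_of_nonneg_left hc1.le (by linarith : (0:ℝ) ≤ 1 - s)]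

end St11

open St11

/-- Density of nice profiles: every `ρ ∈ 𝓜` is the limit in `𝓜` of a sequence of `C²`
profiles `ρⁿ` with `ρⁿ(±1) = ρ±`, `0 < ρⁿ < 1`, and `S_E(ρⁿ) → S_E(ρ)`. -/
theorem stmt11 (ρm ρp φm φp E0 : ℝ)
    (h0 : 0 < ρm) (h1 : ρm < ρp) (h2 : ρp < 1)
    (hφm : φm = Real.log (ρm / (1 - ρm))) (hφp : φp = Real.log (ρp / (1 - ρp)))
    (hE0 : E0 = (φp - φm) / 2) (E J A : ℝ) (hE : E < E0)
    (hJneg : J ≤ 0) (hJeq : (1/2) * (∫ r in ρm..ρp, (E * chi r - J)⁻¹) = 1)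
    (hA : A = if E = 0 then Real.log ((ρp - ρm) / 2) + 1
      else Real.log (-J) + (1/2) * ∫ r in ρm..ρp, (E * chi r)⁻¹ * Real.log (1 - E * chi r / J))
    (ρ : ℝ → ℝ) (hρ : memM ρ) :
    ∃ ρn : ℕ → ℝ → ℝ,
      (∀ n, memM (ρn n)) ∧ convM ρn ρ ∧
      (∀ n, ∃ d1 d2 : ℝ → ℝ,
        (∀ u ∈ Set.Icc (-1:ℝ) 1, HasDerivWithinAt (ρn n) (d1 u) (Set.Icc (-1:ℝ) 1) u) ∧
        (∀ u ∈ Set.Icc (-1:ℝ) 1, HasDerivWithinAt d1 (d2 u) (Set.Icc (-1:ℝ) 1) u) ∧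
        ContinuousOn d2 (Set.Icc (-1:ℝ) 1)) ∧
      (∀ n, ρn n (-1) = ρm ∧ ρn n 1 = ρp) ∧
      (∀ n, ∀ u ∈ Set.Icc (-1:ℝ) 1, 0 < ρn n u ∧ ρn n u < 1) ∧
      Filter.Tendsto (fun n => SE φm φp E A (ρn n)) Filter.atTop
        (nhds (SE φm φp E A ρ)) := by
  -- basic facts
  have hφmp : φm < φp := by
    rw [hφm, hφp]
    apply Real.log_lt_log (div_pos h0 (by linarith))
    rw [div_lt_div_iff₀ (by linarith) (by linarith)]
    nlinarith
  have hE' : E < (φp - φm) / 2 := by rw [hE0] at hE; exact hE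
  have hne : ∃ φ0 d0 : ℝ → ℝ, memF φm φp E φ0 d0 := ⟨_, _, memF_lin hφmp hE'⟩
  -- clamped profile
  set rst : ℝ → ℝ := fun u => min 1 (max 0 (ρ u)) with hrst
  have hrmeas : Measurable rst := measurable_const.min (measurable_const.max hρ.1)
  have hr01 : ∀ u, rst u ∈ Set.Icc (0:ℝ) 1 := by
    intro u
    constructor
    · exact le_min (by norm_num) (le_max_left 0 (ρ u))
    · exact min_le_left _ _
  have hr_eq : ∀ u ∈ Set.Icc (-1:ℝ) 1, rst u = ρ u := by
    intro u hu
    have h := hρ.2 u hu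
    simp only [hrst]
    rw [max_eq_right h.1, min_eq_right h.2]
  -- smooth approximations in L¹
  obtain ⟨fN, hfsm, hf01, hfL1⟩ := exists_smooth_approx rst hrmeas hr01
  -- subsequence converging a.e.
  have hfint : ∀ n, Integrable (fN n - rst)
      (volume.restrict (Set.Icc (-1:ℝ) 1)) := by
    intro n
    apply intIcc ((hfsm n).continuous.measurable.sub hrmeas).aestronglyMeasurable (C := 2)
    intro u _
    have h1 := hf01 n u
    have h2 := hr01 u
    rw [Pi.sub_apply, abs_le]
    constructor <;> [linarith [h1.1, h2.2]; linarith [h1.2, h2.1]]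
  have heLp : Filter.Tendsto (fun n => eLpNorm (fN n - rst) 1
      (volume.restrict (Set.Icc (-1:ℝ) 1))) Filter.atTop (nhds 0) := by
    have heq : ∀ n, eLpNorm (fN n - rst) 1 (volume.restrict (Set.Icc (-1:ℝ) 1))
        = ENNReal.ofReal (∫ u in Set.Icc (-1:ℝ) 1, |fN n u - rst u|) := by
      intro n
      rw [eLpNorm_one_eq_lintegral_enorm,
        ← ofReal_integral_norm_eq_lintegral_enorm (hfint n)]
      congr 1
    simp only [heq]
    have := ENNReal.tendsto_ofReal hfL1
    simpa using this
  have hmeasconv : TendstoInMeasure (volume.restrict (Set.Icc (-1:ℝ) 1)) fN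
      Filter.atTop rst :=
    tendstoInMeasure_of_tendsto_eLpNorm one_ne_zero
      (fun n => (hfsm n).continuous.aestronglyMeasurable)
      hrmeas.aestronglyMeasurable heLp
  obtain ⟨ns, -, hae⟩ := hmeasconv.exists_seq_tendsto_ae
  -- bump functions and linear interpolation
  set b : ℕ → ContDiffBump (0:ℝ) := fun n =>
    ⟨1 - ((n:ℝ)+2)⁻¹, 1, by linarith [theta_le_half n], by linarith [theta_pos n]⟩ with hb
  set lin : ℝ → ℝ := fun u => ρm + (ρp - ρm) * (u + 1) / 2 with hlin
  set R : ℕ → ℝ → ℝ := fun n u => (b n) u * fN (ns n) u + (1 - (b n) u) * lin u with hR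
  have hlinsm : ContDiff ℝ (⊤ : ℕ∞) lin := by
    apply contDiff_const.add
    exact (contDiff_const.mul (contDiff_id.add contDiff_const)).div_const 2
  have hsm : ∀ n, ContDiff ℝ (⊤ : ℕ∞) (R n) := by
    intro n
    exact ((b n).contDiff.mul (hfsm (ns n))).add
      ((contDiff_const.sub (b n).contDiff).mul hlinsm)
  have hlinb : ∀ u ∈ Set.Icc (-1:ℝ) 1, ρm ≤ lin u ∧ lin u ≤ ρp := by
    intro u hu
    have h3 := hu.1
    have h4 := hu.2
    constructor
    · simp only [hlin]; nlinarith
    · simp only [hlin]; nlinarith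
  have hval : ∀ n, ∀ u ∈ Set.Icc (-1:ℝ) 1, 0 < R n u ∧ R n u < 1 := by
    intro n u hu
    have hs := (b n).nonneg (x := u)
    have hs1 := (b n).le_one (x := u)
    have hf := hf01 (ns n) u
    have hl := hlinb u hu
    exact convex_mem hs hs1 hf.1 hf.2 (lt_of_lt_of_le h0 hl.1) (lt_of_le_of_lt hl.2 h2)
  have hmem : ∀ n, memM (R n) := by
    intro n
    refine ⟨(hsm n).continuous.measurable, fun u hu => ?_⟩
    have := hval n u hu
    exact ⟨this.1.le, this.2.le⟩
  -- pointwise a.e. convergence of R to ρ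
  have hptws : ∀ᵐ u ∂(volume.restrict (Set.Ioc (-1:ℝ) 1)),
      Filter.Tendsto (fun n => R n u) Filter.atTop (nhds (ρ u)) := by
    have hae' : ∀ᵐ u ∂(volume.restrict (Set.Ioc (-1:ℝ) 1)),
        Filter.Tendsto (fun i => fN (ns i) u) Filter.atTop (nhds (rst u)) :=
      ae_restrict_of_ae_restrict_of_subset Set.Ioc_subset_Icc_self hae
    have hone : ∀ᵐ u ∂(volume.restrict (Set.Ioc (-1:ℝ) 1)), u ≠ 1 := by
      rw [ae_iff]
      have hsub : {u : ℝ | ¬ u ≠ 1} = {1} := by ext x; simp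
      rw [hsub]
      exact le_antisymm (le_trans (Measure.le_iff'.1 Measure.restrict_le_self _) (by simp)) zero_le
    filter_upwards [hae', hone, ae_restrict_mem measurableSet_Ioc] with u hu hu1 huIoc
    have huabs : |u| < 1 := by
      rw [abs_lt]
      exact ⟨huIoc.1, lt_of_le_of_ne huIoc.2 hu1⟩
    have hev : ∀ᶠ n in Filter.atTop, R n u = fN (ns n) u := by
      have h2 : ∀ᶠ n : ℕ in Filter.atTop, ((n:ℝ)+2)⁻¹ < 1 - |u| :=
        theta_tendsto.eventually (gt_mem_nhds (by linarith))
      filter_upwards [h2] with n hn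
      have hbu : (b n) u = 1 := by
        apply (b n).one_of_mem_closedBall
        simp only [Metric.mem_closedBall, Real.dist_eq, sub_zero]
        show |u| ≤ 1 - ((n:ℝ)+2)⁻¹
        linarith
      simp only [hR, hbu]
      ring
    have : Filter.Tendsto (fun n => fN (ns n) u) Filter.atTop (nhds (ρ u)) := by
      rw [← hr_eq u (Set.Ioc_subset_Icc_self huIoc)]
      exact hu
    exact this.congr' (by filter_upwards [hev] with n hn using hn.symm)
  -- conclusion
  refine ⟨R, hmem, ?_, ?_, ?_, hval, ?_⟩
  · -- convM
    intro G hG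
    obtain ⟨CG, hCG⟩ := isCompact_Icc.exists_bound_of_continuousOn hG
    apply tendstoII (C := CG)
    · intro n
      exact ((hsm n).continuous.aestronglyMeasurable).mul
        ((hG.mono Set.Ioc_subset_Icc_self).aestronglyMeasurable measurableSet_Ioc)
    · intro n u hu
      have h := hval n u hu
      have hb' := hCG u hu
      rw [Real.norm_eq_abs] at hb'
      rw [abs_mul]
      calc |R n u| * |G u| ≤ 1 * |G u| := by
            apply mul_le_mul_of_nonneg_right _ (abs_nonneg _)
            rw [abs_le]; constructor <;> linarith [h.1, h.2]
        _ = |G u| := one_mul _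
        _ ≤ CG := hb'
    · filter_upwards [hptws] with u hu
      exact hu.mul_const (G u)
  · -- C² regularity
    intro n
    have h1 : ContDiff ℝ (⊤ : ℕ∞) (deriv (R n)) := (contDiff_infty_iff_deriv.1 (hsm n)).2
    have h2 : ContDiff ℝ (⊤ : ℕ∞) (deriv (deriv (R n))) := (contDiff_infty_iff_deriv.1 h1).2
    refine ⟨deriv (R n), deriv (deriv (R n)), ?_, ?_, h2.continuous.continuousOn⟩
    · intro u _
      exact (((contDiff_infty_iff_deriv.1 (hsm n)).1) u).hasDerivAt.hasDerivWithinAt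
    · intro u _
      exact (((contDiff_infty_iff_deriv.1 h1).1) u).hasDerivAt.hasDerivWithinAt
  · -- boundary values
    intro n
    have hbm : (b n) (-1) = 0 := by
      apply (b n).zero_of_le_dist
      show (1:ℝ) ≤ dist _ (0:ℝ)
      rw [Real.dist_eq]
      norm_num
    have hbp : (b n) 1 = 0 := by
      apply (b n).zero_of_le_dist
      show (1:ℝ) ≤ dist _ (0:ℝ)
      rw [Real.dist_eq]
      norm_num
    constructor
    · simp only [hR, hbm, hlin]; ring
    · simp only [hR, hbp, hlin]; ring
  · -- convergence of SE
    set M0 : ℝ := max |φm| |φp| with hM0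
    have hM0nn : 0 ≤ M0 := le_trans (abs_nonneg φm) (le_max_left _ _)
    have hDtend : Filter.Tendsto (fun n => Dint M0 (R n) ρ) Filter.atTop (nhds 0) := by
      have h0int : (∫ u in (-1:ℝ)..1, (0:ℝ)) = 0 := by simp
      have := tendstoII (f := fun _ => (0:ℝ))
        (F := fun n u => |Hf (R n u) - Hf (ρ u)| + M0 * |R n u - ρ u|)
        (C := 4 + M0) ?_ ?_ ?_
      · unfold Dint
        rw [h0int] at this
        exact this
      · intro n
        have hm : Measurable fun u => |Hf (R n u) - Hf (ρ u)| + M0 * |R n u - ρ u| := by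
          apply Measurable.add
          · exact ((continuous_Hf.measurable.comp (hsm n).continuous.measurable).sub
              (continuous_Hf.measurable.comp hρ.1)).abs
          · exact measurable_const.mul ((hsm n).continuous.measurable.sub hρ.1).abs
        exact hm.aestronglyMeasurable
      · intro n u hu
        have hr1 := hval n u hu
        have hr2 := hρ.2 u hu
        have e1 : |Hf (R n u) - Hf (ρ u)| ≤ 4 := by
          calc |Hf (R n u) - Hf (ρ u)| ≤ |Hf (R n u)| + |Hf (ρ u)| := abs_sub _ _
            _ ≤ 4 := by linarith [abs_Hf_le hr1.1.le hr1.2.le, abs_Hf_le hr2.1 hr2.2]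
        have e2 : M0 * |R n u - ρ u| ≤ M0 := by
          calc M0 * |R n u - ρ u| ≤ M0 * 1 := by
                apply mul_le_mul_of_nonneg_left _ hM0nn
                rw [abs_le]; constructor <;> nlinarith [hr1.1, hr1.2, hr2.1, hr2.2]
            _ = M0 := mul_one _
        have e3 : (0:ℝ) ≤ |Hf (R n u) - Hf (ρ u)| := abs_nonneg _
        have e4 : (0:ℝ) ≤ M0 * |R n u - ρ u| := mul_nonneg hM0nn (abs_nonneg _)
        show abs (|Hf (R n u) - Hf (ρ u)| + M0 * |R n u - ρ u|) ≤ 4 + M0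
        rw [abs_le]
        constructor <;> linarith
      · filter_upwards [hptws] with u hu
        have l1 : Filter.Tendsto (fun n => Hf (R n u)) Filter.atTop (nhds (Hf (ρ u))) :=
          (continuous_Hf.tendsto _).comp hu
        have l2 : Filter.Tendsto (fun n => |Hf (R n u) - Hf (ρ u)|) Filter.atTop (nhds 0) := by
          have := (l1.sub (tendsto_const_nhds (x := Hf (ρ u)))).abs
          simpa using this
        have l3 : Filter.Tendsto (fun n => |R n u - ρ u|) Filter.atTop (nhds 0) := by
          have := (hu.sub (tendsto_const_nhds (x := ρ u))).abs
          simpa using this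
        have := l2.add (l3.const_mul M0)
        simpa using this
    have hSEd : ∀ n, |SE φm φp E A (R n) - SE φm φp E A ρ| ≤ Dint M0 (R n) ρ := by
      intro n
      rw [abs_sub_le_iff]
      constructor
      · have := SE_diff (A := A) (hmem n) hρ hne
        linarith
      · have h := SE_diff (A := A) hρ (hmem n) hne
        rw [Dint_symm] at h
        linarith
    have hz : Filter.Tendsto (fun n => SE φm φp E A (R n) - SE φm φp E A ρ)
        Filter.atTop (nhds 0) := by
      apply squeeze_zero_norm (fun n => ?_) hDtend
      rw [Real.norm_eq_abs]
      exact hSEd n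
    have := hz.add_const (SE φm φp E A ρ)
    simpa using this
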